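/- There exists n₀ and, for each integer n ≥ n₀, a complex number λ_n with Im λ_n > 0 and G_n(λ_n) = 0, such that λ_n/n → iα as n → ∞; that is, G_n has a zero λ_n^+ = iαn + o(n) in the upper half-plane (and, by conjugation symmetry, a zero conj(λ_n^+) = −iαn + o(n) in the lower half-plane). -/

import Mathlib

open Filter Topology

/- Indexing convention: the paper's sequences `(a_k)_{k ≥ 1}`, `(b_k)_{k ≥ 1}` are
encoded as functions `a b : ℕ → ℝ`, where index `k : ℕ` corresponds to the paper's
index `k + 1` (so `b 0 = b_1`, etc.). -/

/-- `GPK a b z = K(z) = ∑ a_k / (z + b_k)`. -/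
noncomputable def GPK (a b : ℕ → ℝ) (z : ℂ) : ℂ := ∑' k : ℕ, (a k : ℂ) / (z + (b k : ℂ))

/-- `GPG a b n z = G_n(z) = z + n² K(z)`. -/
noncomputable def GPG (a b : ℕ → ℝ) (n : ℕ) (z : ℂ) : ℂ := z + (n : ℂ) ^ 2 * GPK a b z

/-! ### Auxiliary lemmas -/

lemma GP_im_le_norm_add (z : ℂ) (c : ℝ) (hz : 0 ≤ z.im) : z.im ≤ ‖z + (c:ℂ)‖ := by
  have h1 : (z + (c:ℂ)).im = z.im := by simp
  calc z.im = |(z + (c:ℂ)).im| := by rw [h1, abs_of_nonneg hz]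
    _ ≤ ‖z + (c:ℂ)‖ := by exact Complex.abs_im_le_norm _

lemma GP_norm_ge_im (z : ℂ) : z.im ≤ ‖z‖ := by
  calc z.im ≤ |z.im| := le_abs_self _
    _ ≤ ‖z‖ := by exact Complex.abs_im_le_norm _

lemma GP_inv_norm_le {d : ℝ} (hd : 0 < d) {u : ℂ} (hu : d ≤ ‖u‖) : ‖u⁻¹‖ ≤ 1/d := by
  rw [norm_inv, one_div]; exact inv_anti₀ hd hu

lemma GP_summable_mul {a : ℕ → ℝ} (hA : Summable a) (ha : ∀ k, 0 ≤ a k)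
    {g : ℕ → ℂ} {M : ℝ} (hg : ∀ k, ‖g k‖ ≤ M) :
    Summable (fun k => (a k : ℂ) * g k) := by
  apply Summable.of_norm_bounded (g := fun k => a k * M) (hA.mul_right M)
  intro k
  rw [norm_mul, Complex.norm_real, Real.norm_eq_abs, abs_of_nonneg (ha k)]
  exact mul_le_mul_of_nonneg_left (hg k) (ha k)

lemma GP_recip_diff {d : ℝ} (hd : 0 < d) {u v : ℂ} (hu : d ≤ ‖u‖) (hv : d ≤ ‖v‖) :
    ‖u⁻¹ - v⁻¹‖ ≤ ‖u - v‖ / (d*d) ∧ ‖u⁻¹ - v⁻¹‖ ≤ 2/d := by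
  have hu0 : u ≠ 0 := by intro h; rw [h] at hu; simp at hu; linarith
  have hv0 : v ≠ 0 := by intro h; rw [h] at hv; simp at hv; linarith
  have key : u⁻¹ - v⁻¹ = (v - u) * u⁻¹ * v⁻¹ := by field_simp
  have h1 : ‖u‖⁻¹ ≤ d⁻¹ := inv_anti₀ hd hu
  have h2 : ‖v‖⁻¹ ≤ d⁻¹ := inv_anti₀ hd hv
  constructor
  · rw [key]
    have heq : ‖(v - u) * u⁻¹ * v⁻¹‖ = ‖v - u‖ * ‖u‖⁻¹ * ‖v‖⁻¹ := by
      simp [norm_mul, norm_inv]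
    rw [heq, norm_sub_rev u v, div_eq_mul_inv, mul_inv]
    have hn : (0:ℝ) ≤ ‖v - u‖ := norm_nonneg _
    calc ‖v - u‖ * ‖u‖⁻¹ * ‖v‖⁻¹ ≤ ‖v - u‖ * d⁻¹ * d⁻¹ := by
          apply mul_le_mul (mul_le_mul_of_nonneg_left h1 hn) h2 (by positivity) (by positivity)
      _ = ‖v - u‖ * (d⁻¹ * d⁻¹) := by ring
  · calc ‖u⁻¹ - v⁻¹‖ ≤ ‖u⁻¹‖ + ‖v⁻¹‖ := norm_sub_le _ _
      _ ≤ 1/d + 1/d := by rw [norm_inv, norm_inv, one_div]; exact add_le_add h1 h2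
      _ = 2/d := by ring

lemma GP_recip_diff_min {d : ℝ} (hd : 0 < d) {u v : ℂ} (hu : d ≤ ‖u‖) (hv : d ≤ ‖v‖) :
    ‖u⁻¹ - v⁻¹‖ ≤ (2/d) * min 1 (‖u - v‖/d) := by
  obtain ⟨h1, h2⟩ := GP_recip_diff hd hu hv
  rcases le_total 1 (‖u - v‖/d) with h | h
  · rw [min_eq_left h]; simpa using h2
  · rw [min_eq_right h]
    calc ‖u⁻¹ - v⁻¹‖ ≤ ‖u - v‖ / (d*d) := h1
      _ ≤ (2/d) * (‖u - v‖/d) := by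
          rw [div_mul_div_comm]
          gcongr
          linarith [norm_nonneg (u - v)]

lemma GP_recip_prod_diff {d : ℝ} (hd : 0 < d) {u u' v v' : ℂ}
    (hu : d ≤ ‖u‖) (hu' : d ≤ ‖u'‖) (hv : d ≤ ‖v‖) (hv' : d ≤ ‖v'‖)
    {c : ℝ} (hc : 0 ≤ c) (huv : ‖u - v‖ ≤ c) (huv' : ‖u' - v'‖ ≤ c) :
    ‖(u*u')⁻¹ - (v*v')⁻¹‖ ≤ (4/(d*d)) * min 1 (c/d) := by
  have hu0 : u ≠ 0 := by intro h; rw [h] at hu; simp at hu; linarith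
  have hv0 : v ≠ 0 := by intro h; rw [h] at hv; simp at hv; linarith
  have hu0' : u' ≠ 0 := by intro h; rw [h] at hu'; simp at hu'; linarith
  have hv0' : v' ≠ 0 := by intro h; rw [h] at hv'; simp at hv'; linarith
  have key : (u*u')⁻¹ - (v*v')⁻¹ = u⁻¹ * (u'⁻¹ - v'⁻¹) + v'⁻¹ * (u⁻¹ - v⁻¹) := by
    field_simp; ring
  have hnu : ‖u⁻¹‖ ≤ 1/d := by rw [norm_inv, one_div]; exact inv_anti₀ hd hu
  have hnv' : ‖v'⁻¹‖ ≤ 1/d := by rw [norm_inv, one_div]; exact inv_anti₀ hd hv'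
  have hmm : ∀ x : ℝ, x ≤ c → min 1 (x/d) ≤ min 1 (c/d) := by
    intro x hx; gcongr
  have b1 : ‖u'⁻¹ - v'⁻¹‖ ≤ (2/d) * min 1 (c/d) :=
    le_trans (GP_recip_diff_min hd hu' hv') (by gcongr)
  have b2 : ‖u⁻¹ - v⁻¹‖ ≤ (2/d) * min 1 (c/d) :=
    le_trans (GP_recip_diff_min hd hu hv) (by gcongr)
  calc ‖(u*u')⁻¹ - (v*v')⁻¹‖ ≤ ‖u⁻¹ * (u'⁻¹ - v'⁻¹)‖ + ‖v'⁻¹ * (u⁻¹ - v⁻¹)‖ := by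
        rw [key]; exact norm_add_le _ _
    _ ≤ (1/d) * ((2/d) * min 1 (c/d)) + (1/d) * ((2/d) * min 1 (c/d)) := by
        rw [norm_mul, norm_mul]
        exact add_le_add (mul_le_mul hnu b1 (norm_nonneg _) (by positivity))
          (mul_le_mul hnv' b2 (norm_nonneg _) (by positivity))
    _ = (4/(d*d)) * min 1 (c/d) := by ring

lemma GP_summable_min {a c : ℕ → ℝ} {d : ℝ} (hd : 0 < d) (hA : Summable a)
    (ha' : ∀ k, 0 ≤ a k) (hc0 : ∀ k, 0 ≤ c k) :
    Summable (fun k => a k * min 1 (c k / d)) := by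
  apply Summable.of_nonneg_of_le
    (fun k => mul_nonneg (ha' k) (le_min zero_le_one (div_nonneg (hc0 k) hd.le)))
    (fun k => mul_le_of_le_one_right (ha' k) (min_le_left _ _)) hA

lemma GP_stepA {a c : ℕ → ℝ} {d : ℝ} (hd : 0 < d) (hA : Summable a) (ha' : ∀ k, 0 ≤ a k)
    {w w' : ℂ} (hw : ∀ k, d ≤ ‖w + (c k:ℂ)‖) (hw' : ∀ k, d ≤ ‖w' + (c k:ℂ)‖) :
    (w + ∑' k, (a k:ℂ)/(w + (c k:ℂ))) - (w' + ∑' k, (a k:ℂ)/(w' + (c k:ℂ)))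
      = (w - w') * (1 - ∑' k, (a k:ℂ) * ((w + (c k:ℂ))*(w' + (c k:ℂ)))⁻¹) := by
  have hs1 : Summable (fun k => (a k:ℂ) * (w + (c k:ℂ))⁻¹) :=
    GP_summable_mul hA ha' (M := 1/d) (fun k => GP_inv_norm_le hd (hw k))
  have hs2 : Summable (fun k => (a k:ℂ) * (w' + (c k:ℂ))⁻¹) :=
    GP_summable_mul hA ha' (M := 1/d) (fun k => GP_inv_norm_le hd (hw' k))
  have h1 : (∑' k, (a k:ℂ)/(w + (c k:ℂ))) = ∑' k, (a k:ℂ) * (w + (c k:ℂ))⁻¹ :=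
    tsum_congr fun k => div_eq_mul_inv _ _
  have h2 : (∑' k, (a k:ℂ)/(w' + (c k:ℂ))) = ∑' k, (a k:ℂ) * (w' + (c k:ℂ))⁻¹ :=
    tsum_congr fun k => div_eq_mul_inv _ _
  have hKd : (∑' k, (a k:ℂ) * (w + (c k:ℂ))⁻¹) - (∑' k, (a k:ℂ) * (w' + (c k:ℂ))⁻¹)
      = -(w - w') * ∑' k, (a k:ℂ) * ((w + (c k:ℂ))*(w' + (c k:ℂ)))⁻¹ := by
    rw [← Summable.tsum_sub hs1 hs2, ← tsum_mul_left]
    apply tsum_congr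
    intro k
    have hz1 : (w + (c k:ℂ)) ≠ 0 := by
      intro h; have := hw k; rw [h] at this; simp at this; linarith
    have hz2 : (w' + (c k:ℂ)) ≠ 0 := by
      intro h; have := hw' k; rw [h] at this; simp at this; linarith
    field_simp
    ring
  rw [h1, h2]
  have h3 : (w + ∑' k, (a k:ℂ) * (w + (c k:ℂ))⁻¹) - (w' + ∑' k, (a k:ℂ) * (w' + (c k:ℂ))⁻¹)
      = (w - w') + ((∑' k, (a k:ℂ) * (w + (c k:ℂ))⁻¹) - ∑' k, (a k:ℂ) * (w' + (c k:ℂ))⁻¹) := by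
    ring
  rw [h3, hKd]
  ring

lemma GP_stepB {a c : ℕ → ℝ} {α d : ℝ} (hd : 0 < d) (hsum : HasSum a (α^2))
    (ha' : ∀ k, 0 ≤ a k) (hc0 : ∀ k, 0 ≤ c k) {w w' : ℂ}
    (hw : ∀ k, d ≤ ‖w + (c k:ℂ)‖) (hw' : ∀ k, d ≤ ‖w' + (c k:ℂ)‖)
    (hwn : d ≤ ‖w‖) (hwn' : d ≤ ‖w'‖) :
    ‖(∑' k, (a k:ℂ) * ((w + (c k:ℂ))*(w' + (c k:ℂ)))⁻¹) - ((α^2 : ℝ):ℂ) * (w*w')⁻¹‖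
      ≤ (4/(d*d)) * ∑' k, a k * min 1 (c k / d) := by
  have hA : Summable a := hsum.summable
  have hmin := GP_summable_min hd hA ha' hc0
  have hs2 : Summable (fun k => (a k:ℂ) * ((w + (c k:ℂ))*(w' + (c k:ℂ)))⁻¹) := by
    apply GP_summable_mul hA ha' (M := 1/d * (1/d))
    intro k
    rw [mul_inv, norm_mul]
    exact mul_le_mul (GP_inv_norm_le hd (hw k)) (GP_inv_norm_le hd (hw' k))
      (norm_nonneg _) (by positivity)
  have hs3 : Summable (fun k => (a k:ℂ) * ((w*w')⁻¹)) := by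
    apply GP_summable_mul hA ha' (M := 1/d * (1/d))
    intro k
    rw [mul_inv, norm_mul]
    exact mul_le_mul (GP_inv_norm_le hd hwn) (GP_inv_norm_le hd hwn')
      (norm_nonneg _) (by positivity)
  have hα : ((α^2 : ℝ):ℂ) = ∑' k, (a k:ℂ) := ((Complex.hasSum_ofReal.mpr hsum).tsum_eq).symm
  rw [hα, ← tsum_mul_right, ← Summable.tsum_sub hs2 hs3]
  have hterm : ∀ k, (a k:ℂ) * ((w + (c k:ℂ))*(w' + (c k:ℂ)))⁻¹ - (a k:ℂ) * (w*w')⁻¹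
      = (a k:ℂ) * (((w + (c k:ℂ))*(w' + (c k:ℂ)))⁻¹ - (w*w')⁻¹) := fun k => (mul_sub _ _ _).symm
  rw [tsum_congr hterm]
  apply tsum_of_norm_bounded (hmin.hasSum.mul_left (4/(d*d)))
  intro k
  rw [norm_mul, Complex.norm_real, Real.norm_eq_abs, abs_of_nonneg (ha' k)]
  have huv : ‖(w + (c k:ℂ)) - w‖ ≤ c k := by
    simp [abs_of_nonneg (hc0 k)]
  have huv' : ‖(w' + (c k:ℂ)) - w'‖ ≤ c k := by
    simp [abs_of_nonneg (hc0 k)]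
  have hb := GP_recip_prod_diff hd (hw k) (hw' k) hwn hwn' (hc0 k) huv huv'
  calc a k * ‖((w + (c k:ℂ))*(w' + (c k:ℂ)))⁻¹ - (w*w')⁻¹‖
      ≤ a k * ((4/(d*d)) * min 1 (c k/d)) := mul_le_mul_of_nonneg_left hb (ha' k)
    _ = 4/(d*d) * (a k * min 1 (c k/d)) := by ring

lemma GP_stepC {α : ℝ} (hα : 0 < α) {w w' : ℂ}
    (hw : ‖w - Complex.I*(α:ℂ)‖ ≤ α/8) (hw' : ‖w' - Complex.I*(α:ℂ)‖ ≤ α/8)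
    (hwn : 7*α/8 ≤ ‖w‖) (hwn' : 7*α/8 ≤ ‖w'‖) :
    ‖1 + ((α^2:ℝ):ℂ) * (w*w')⁻¹‖ ≤ 17/49 := by
  have hw0 : w ≠ 0 := by intro h; rw [h] at hwn; simp at hwn; linarith
  have hw0' : w' ≠ 0 := by intro h; rw [h] at hwn'; simp at hwn'; linarith
  have hid : (1 : ℂ) + ((α^2:ℝ):ℂ) * (w*w')⁻¹ = (w*w' + ((α^2:ℝ):ℂ)) * (w*w')⁻¹ := by
    field_simp
  have hid2 : w*w' + ((α^2:ℝ):ℂ)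
      = Complex.I*(α:ℂ)*((w - Complex.I*(α:ℂ)) + (w' - Complex.I*(α:ℂ)))
        + (w - Complex.I*(α:ℂ))*(w' - Complex.I*(α:ℂ)) := by
    push_cast
    linear_combination (α:ℂ)^2 * Complex.I_sq
  have hnormIa : ‖Complex.I*(α:ℂ)‖ = α := by
    rw [norm_mul, Complex.norm_I, one_mul, Complex.norm_real, Real.norm_eq_abs,
      abs_of_nonneg hα.le]
  have hnum : ‖w*w' + ((α^2:ℝ):ℂ)‖ ≤ 17*α^2/64 := by
    rw [hid2]
    calc ‖Complex.I*(α:ℂ)*((w - Complex.I*(α:ℂ)) + (w' - Complex.I*(α:ℂ)))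
          + (w - Complex.I*(α:ℂ))*(w' - Complex.I*(α:ℂ))‖
        ≤ ‖Complex.I*(α:ℂ)‖ * ‖(w - Complex.I*(α:ℂ)) + (w' - Complex.I*(α:ℂ))‖
          + ‖w - Complex.I*(α:ℂ)‖ * ‖w' - Complex.I*(α:ℂ)‖ := by
          refine le_trans (norm_add_le _ _) ?_
          rw [norm_mul, norm_mul]
          exact add_le_add le_rfl (norm_mul_le _ _)
      _ ≤ α * (α/8 + α/8) + (α/8) * (α/8) := by
          rw [hnormIa]
          refine add_le_add ?_ ?_
          · refine mul_le_mul_of_nonneg_left (le_trans (norm_add_le _ _) ?_) hα.le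
            exact add_le_add hw hw'
          · exact mul_le_mul hw hw' (norm_nonneg _) (by linarith)
      _ = 17*α^2/64 := by ring
  have hden : ‖(w*w')⁻¹‖ ≤ 64/(49*α^2) := by
    rw [norm_inv, norm_mul]
    have h1 : 49*α^2/64 ≤ ‖w‖ * ‖w'‖ := by
      calc 49*α^2/64 = (7*α/8) * (7*α/8) := by ring
        _ ≤ ‖w‖ * ‖w'‖ := mul_le_mul hwn hwn' (by positivity) (norm_nonneg _)
    calc (‖w‖ * ‖w'‖)⁻¹ ≤ (49*α^2/64)⁻¹ := inv_anti₀ (by positivity) h1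
      _ = 64/(49*α^2) := by rw [inv_div]
  rw [hid, norm_mul]
  calc ‖w*w' + ((α^2:ℝ):ℂ)‖ * ‖(w*w')⁻¹‖ ≤ (17*α^2/64) * (64/(49*α^2)) :=
        mul_le_mul hnum hden (norm_nonneg _) (by positivity)
    _ = 17/49 := by field_simp

lemma GP_stepE {a c : ℕ → ℝ} {α d : ℝ} (hα : 0 < α) (hd : 0 < d) (hdα : d ≤ α)
    (hsum : HasSum a (α^2)) (ha' : ∀ k, 0 ≤ a k) (hc0 : ∀ k, 0 ≤ c k) :
    ‖Complex.I*(α:ℂ) + ∑' k, (a k:ℂ)/(Complex.I*(α:ℂ) + (c k:ℂ))‖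
      ≤ (2/d) * ∑' k, a k * min 1 (c k / d) := by
  have hA : Summable a := hsum.summable
  have hmin := GP_summable_min hd hA ha' hc0
  have hIm : (Complex.I*(α:ℂ)).im = α := by simp
  have hne : Complex.I*(α:ℂ) ≠ 0 := by
    intro h
    have h0 : (Complex.I*(α:ℂ)).im = 0 := by rw [h]; simp
    rw [hIm] at h0; linarith
  have hnorm : d ≤ ‖Complex.I*(α:ℂ)‖ := by
    refine le_trans hdα ?_
    rw [norm_mul, Complex.norm_I, one_mul, Complex.norm_real, Real.norm_eq_abs,
      abs_of_nonneg hα.le]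
  have hnormk : ∀ k, d ≤ ‖Complex.I*(α:ℂ) + (c k:ℂ)‖ := by
    intro k
    have := GP_im_le_norm_add (Complex.I*(α:ℂ)) (c k) (by rw [hIm]; exact hα.le)
    rw [hIm] at this; linarith
  have hs1 : Summable (fun k => (a k:ℂ) * (Complex.I*(α:ℂ) + (c k:ℂ))⁻¹) :=
    GP_summable_mul hA ha' (M := 1/d) (fun k => GP_inv_norm_le hd (hnormk k))
  have hs2 : Summable (fun k => (a k:ℂ) * (Complex.I*(α:ℂ))⁻¹) :=
    GP_summable_mul hA ha' (M := 1/d) (fun k => GP_inv_norm_le hd hnorm)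
  have hα2 : ((α^2 : ℝ):ℂ) = ∑' k, (a k:ℂ) := ((Complex.hasSum_ofReal.mpr hsum).tsum_eq).symm
  have hIa : Complex.I*(α:ℂ) = -(((α^2 : ℝ):ℂ) * (Complex.I*(α:ℂ))⁻¹) := by
    push_cast
    field_simp
    linear_combination (α:ℂ) * Complex.I_sq
  have key : Complex.I*(α:ℂ) + ∑' k, (a k:ℂ)/(Complex.I*(α:ℂ) + (c k:ℂ))
      = ∑' k, (a k:ℂ) * ((Complex.I*(α:ℂ) + (c k:ℂ))⁻¹ - (Complex.I*(α:ℂ))⁻¹) := by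
    have h1 : (∑' k, (a k:ℂ)/(Complex.I*(α:ℂ) + (c k:ℂ)))
        = ∑' k, (a k:ℂ) * (Complex.I*(α:ℂ) + (c k:ℂ))⁻¹ :=
      tsum_congr fun k => div_eq_mul_inv _ _
    have h2 : Complex.I*(α:ℂ) = -∑' k, (a k:ℂ) * (Complex.I*(α:ℂ))⁻¹ := by
      rw [tsum_mul_right, ← hα2, ← hIa]
    have h3 : (∑' k, (a k:ℂ) * ((Complex.I*(α:ℂ) + (c k:ℂ))⁻¹ - (Complex.I*(α:ℂ))⁻¹))
        = (∑' k, (a k:ℂ) * (Complex.I*(α:ℂ) + (c k:ℂ))⁻¹)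
          - ∑' k, (a k:ℂ) * (Complex.I*(α:ℂ))⁻¹ := by
      rw [← Summable.tsum_sub hs1 hs2]
      exact tsum_congr fun k => mul_sub _ _ _
    rw [h1, h3]
    linear_combination h2
  rw [key]
  apply tsum_of_norm_bounded (hmin.hasSum.mul_left (2/d))
  intro k
  rw [norm_mul, Complex.norm_real, Real.norm_eq_abs, abs_of_nonneg (ha' k)]
  have hdiff : ‖(Complex.I*(α:ℂ) + (c k:ℂ)) - Complex.I*(α:ℂ)‖ = c k := by
    simp [abs_of_nonneg (hc0 k)]
  have hb := GP_recip_diff_min hd (hnormk k) hnorm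
  rw [hdiff] at hb
  calc a k * ‖(Complex.I*(α:ℂ) + (c k:ℂ))⁻¹ - (Complex.I*(α:ℂ))⁻¹‖
      ≤ a k * ((2/d) * min 1 (c k/d)) := mul_le_mul_of_nonneg_left hb (ha' k)
    _ = 2/d * (a k * min 1 (c k/d)) := by ring
lemma GP_exists_root (a b : ℕ → ℝ) (α : ℝ) (ha : ∀ k, 0 < a k) (hα : 0 < α)
    (hsum : HasSum a (α^2)) (hb : ∀ k, 0 ≤ b k) (n : ℕ) (hn : 1 ≤ n)
    (hE1 : (∑' k, a k * min 1 (b k/(n*(7*α/8)))) ≤ (15/392)*((7*α/8)*(7*α/8)))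
    (hE2 : (∑' k, a k * min 1 (b k/(n*(7*α/8)))) ≤ (3/4)*(α/8)*(7*α/8)) :
    ∃ w : ℂ, ‖w - Complex.I*α‖ ≤ α/8 ∧
      w + ∑' k, (a k:ℂ)/(w + ((b k/(n:ℝ) : ℝ):ℂ)) = 0 ∧
      ‖w - Complex.I*α‖ ≤ (4/(3*(7*α/8))) * (∑' k, a k * min 1 (b k/(n*(7*α/8)))) := by
  have hd : (0:ℝ) < 7*α/8 := by linarith
  have hr : (0:ℝ) < α/8 := by linarith
  set d : ℝ := 7*α/8 with hd_def
  set r : ℝ := α/8 with hr_def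
  set E : ℝ := ∑' k, a k * min 1 (b k/(n*d)) with hE_def
  set c : ℕ → ℝ := fun k => b k / (n:ℝ) with hc_def
  have hn0 : (0:ℝ) < n := by exact_mod_cast hn
  have hc0 : ∀ k, 0 ≤ c k := fun k => div_nonneg (hb k) hn0.le
  have ha' : ∀ k, 0 ≤ a k := fun k => (ha k).le
  have hA : Summable a := hsum.summable
  have hcd : ∀ k, c k / d = b k / (n*d) := by
    intro k; rw [hc_def]; exact div_div _ _ _
  have hEc : (∑' k, a k * min 1 (c k / d)) = E := by
    rw [hE_def]; exact tsum_congr fun k => by rw [hcd k]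
  have hE0 : 0 ≤ E := by
    rw [hE_def]; apply tsum_nonneg; intro k
    exact mul_nonneg (ha' k) (le_min zero_le_one (div_nonneg (hb k) (by positivity)))
  set s : Set ℂ := Metric.closedBall (Complex.I*(α:ℂ)) r with hs_def
  have hnorm_sub : ∀ w ∈ s, ‖w - Complex.I*(α:ℂ)‖ ≤ r := by
    intro w hw; rw [hs_def, Metric.mem_closedBall, dist_eq_norm] at hw; exact hw
  have hmem_im : ∀ w ∈ s, d ≤ w.im := by
    intro w hw
    have h1 : (w - Complex.I*(α:ℂ)).im = w.im - α := by simp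
    have h2 : |w.im - α| ≤ r := by
      rw [← h1]
      calc |(w - Complex.I*(α:ℂ)).im| ≤ ‖w - Complex.I*(α:ℂ)‖ := by
            exact Complex.abs_im_le_norm _
        _ ≤ r := hnorm_sub w hw
    have h3 := (abs_le.1 h2).1
    rw [hd_def, hr_def] at *
    linarith
  have hmem_norm : ∀ w ∈ s, d ≤ ‖w‖ := fun w hw => le_trans (hmem_im w hw) (GP_norm_ge_im w)
  have hmem_add : ∀ w ∈ s, ∀ k, d ≤ ‖w + (c k : ℂ)‖ := by
    intro w hw k
    have h1 := hmem_im w hw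
    have h2 := GP_im_le_norm_add w (c k) (le_trans hd.le h1)
    linarith
  have hmem_center : (Complex.I*(α:ℂ)) ∈ s := by
    rw [hs_def]; exact Metric.mem_closedBall_self hr.le
  -- the contraction estimate
  have hdist : ∀ w ∈ s, ∀ w' ∈ s,
      ‖(w - (w + ∑' k, (a k:ℂ)/(w + (c k:ℂ)))/2)
        - (w' - (w' + ∑' k, (a k:ℂ)/(w' + (c k:ℂ)))/2)‖ ≤ (1/4) * ‖w - w'‖ := by
    intro w hw w' hw'
    have hstA := GP_stepA hd hA ha' (hmem_add w hw) (hmem_add w' hw')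
    have hkey : (w - (w + ∑' k, (a k:ℂ)/(w + (c k:ℂ)))/2)
        - (w' - (w' + ∑' k, (a k:ℂ)/(w' + (c k:ℂ)))/2)
        = (w - w') * (1 + ∑' k, (a k:ℂ) * ((w + (c k:ℂ))*(w' + (c k:ℂ)))⁻¹)/2 := by
      linear_combination (-1/2 : ℂ) * hstA
    have hB := GP_stepB hd hsum ha' hc0 (hmem_add w hw) (hmem_add w' hw')
      (hmem_norm w hw) (hmem_norm w' hw')
    have hC := GP_stepC hα (hnorm_sub w hw) (hnorm_sub w' hw')
      (hmem_norm w hw) (hmem_norm w' hw')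
    have hS : ‖(1:ℂ) + ∑' k, (a k:ℂ) * ((w + (c k:ℂ))*(w' + (c k:ℂ)))⁻¹‖ ≤ 1/2 := by
      have hsplit : (1:ℂ) + ∑' k, (a k:ℂ) * ((w + (c k:ℂ))*(w' + (c k:ℂ)))⁻¹
          = (1 + ((α^2:ℝ):ℂ) * (w*w')⁻¹)
            + ((∑' k, (a k:ℂ) * ((w + (c k:ℂ))*(w' + (c k:ℂ)))⁻¹)
              - ((α^2:ℝ):ℂ) * (w*w')⁻¹) := by ring
      rw [hsplit]
      refine le_trans (norm_add_le _ _) ?_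
      rw [hEc] at hB
      have h4E : (4/(d*d)) * E ≤ 15/98 := by
        have hdd : (0:ℝ) < d*d := by positivity
        rw [div_mul_eq_mul_div, div_le_div_iff₀ hdd (by norm_num : (0:ℝ) < 98)]
        nlinarith [hE1]
      linarith [le_trans hB h4E, hC]
    rw [hkey]
    rw [norm_div, norm_mul]
    have : ‖(2:ℂ)‖ = 2 := by norm_num
    rw [this]
    calc ‖w - w'‖ * ‖(1:ℂ) + ∑' k, (a k:ℂ) * ((w + (c k:ℂ))*(w' + (c k:ℂ)))⁻¹‖ / 2
        ≤ ‖w - w'‖ * (1/2) / 2 := by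
          apply div_le_div_of_nonneg_right ?_ (by norm_num)
          exact mul_le_mul_of_nonneg_left hS (norm_nonneg _)
      _ = (1/4) * ‖w - w'‖ := by ring
  -- distance of center image
  have hcenter : ‖(Complex.I*(α:ℂ)
      - (Complex.I*(α:ℂ) + ∑' k, (a k:ℂ)/(Complex.I*(α:ℂ) + (c k:ℂ)))/2)
      - Complex.I*(α:ℂ)‖ ≤ E/d := by
    have hE' := GP_stepE (a := a) (c := c) hα hd (by rw [hd_def]; linarith) hsum ha' hc0
    rw [hEc] at hE'
    have hid : (Complex.I*(α:ℂ)
        - (Complex.I*(α:ℂ) + ∑' k, (a k:ℂ)/(Complex.I*(α:ℂ) + (c k:ℂ)))/2)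
        - Complex.I*(α:ℂ)
        = -((Complex.I*(α:ℂ) + ∑' k, (a k:ℂ)/(Complex.I*(α:ℂ) + (c k:ℂ)))/2) := by ring
    rw [hid, norm_neg, norm_div]
    have h2 : ‖(2:ℂ)‖ = 2 := by norm_num
    rw [h2]
    calc ‖Complex.I*(α:ℂ) + ∑' k, (a k:ℂ)/(Complex.I*(α:ℂ) + (c k:ℂ))‖/2
        ≤ ((2/d) * E)/2 := by
          apply div_le_div_of_nonneg_right hE' (by norm_num)
      _ = E/d := by field_simp
  -- self-map
  have hmaps : ∀ w ∈ s, (w - (w + ∑' k, (a k:ℂ)/(w + (c k:ℂ)))/2) ∈ s := by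
    intro w hw
    rw [hs_def, Metric.mem_closedBall, dist_eq_norm]
    have h1 := hdist w hw (Complex.I*(α:ℂ)) hmem_center
    have h2 : ‖(w - (w + ∑' k, (a k:ℂ)/(w + (c k:ℂ)))/2) - Complex.I*(α:ℂ)‖
        ≤ (1/4) * ‖w - Complex.I*(α:ℂ)‖ + E/d := by
      calc ‖(w - (w + ∑' k, (a k:ℂ)/(w + (c k:ℂ)))/2) - Complex.I*(α:ℂ)‖
          ≤ ‖(w - (w + ∑' k, (a k:ℂ)/(w + (c k:ℂ)))/2)
              - (Complex.I*(α:ℂ)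
                - (Complex.I*(α:ℂ) + ∑' k, (a k:ℂ)/(Complex.I*(α:ℂ) + (c k:ℂ)))/2)‖
            + ‖(Complex.I*(α:ℂ)
                - (Complex.I*(α:ℂ) + ∑' k, (a k:ℂ)/(Complex.I*(α:ℂ) + (c k:ℂ)))/2)
              - Complex.I*(α:ℂ)‖ := by
            exact norm_sub_le_norm_sub_add_norm_sub _ _ _
        _ ≤ (1/4) * ‖w - Complex.I*(α:ℂ)‖ + E/d := add_le_add h1 hcenter
    have h3 : ‖w - Complex.I*(α:ℂ)‖ ≤ r := hnorm_sub w hw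
    have h4 : E/d ≤ (3/4)*r := by
      rw [div_le_iff₀ hd]
      calc E ≤ (3/4)*r*d := by rw [hE_def, hr_def, hd_def] at *; linarith [hE2]
        _ = 3/4*r*d := by ring
    linarith
  -- fixed point setup
  haveI hcs : CompleteSpace ↥s := by
    rw [hs_def]
    exact Metric.isClosed_closedBall.completeSpace_coe
  haveI hne : Nonempty ↥s := ⟨⟨Complex.I*(α:ℂ), hmem_center⟩⟩
  set φ : ↥s → ↥s := fun x =>
    ⟨x.1 - (x.1 + ∑' k, (a k:ℂ)/(x.1 + (c k:ℂ)))/2, hmaps x.1 x.2⟩ with hφ_def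
  have hcontr : ContractingWith (1/4 : NNReal) φ := by
    constructor
    · rw [← NNReal.coe_lt_coe]; norm_num
    · apply LipschitzWith.of_dist_le_mul
      intro x y
      rw [hφ_def]
      rw [Subtype.dist_eq, Subtype.dist_eq]
      simp only [dist_eq_norm]
      have := hdist x.1 x.2 y.1 y.2
      calc ‖(x.1 - (x.1 + ∑' k, (a k:ℂ)/(x.1 + (c k:ℂ)))/2)
            - (y.1 - (y.1 + ∑' k, (a k:ℂ)/(y.1 + (c k:ℂ)))/2)‖
          ≤ (1/4) * ‖x.1 - y.1‖ := this
        _ = ((1/4 : NNReal) : ℝ) * ‖x.1 - y.1‖ := by push_cast; ring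
  set x₀ := ContractingWith.fixedPoint φ hcontr with hx₀
  have hfix : φ x₀ = x₀ := ContractingWith.fixedPoint_isFixedPt hcontr
  set w₀ : ℂ := x₀.1 with hw₀
  have hw₀s : w₀ ∈ s := x₀.2
  have hfix' : w₀ - (w₀ + ∑' k, (a k:ℂ)/(w₀ + (c k:ℂ)))/2 = w₀ := by
    have := congrArg Subtype.val hfix
    rw [hφ_def] at this
    exact this
  have hroot : w₀ + ∑' k, (a k:ℂ)/(w₀ + (c k:ℂ)) = 0 := by
    linear_combination (-2 : ℂ) * hfix'
  -- final bound
  have hbound : ‖w₀ - Complex.I*(α:ℂ)‖ ≤ (4/(3*d)) * E := by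
    have h1 := hdist w₀ hw₀s (Complex.I*(α:ℂ)) hmem_center
    have h2 : ‖w₀ - Complex.I*(α:ℂ)‖ ≤ (1/4) * ‖w₀ - Complex.I*(α:ℂ)‖ + E/d := by
      calc ‖w₀ - Complex.I*(α:ℂ)‖
          = ‖(w₀ - (w₀ + ∑' k, (a k:ℂ)/(w₀ + (c k:ℂ)))/2) - Complex.I*(α:ℂ)‖ := by
            rw [hfix']
        _ ≤ ‖(w₀ - (w₀ + ∑' k, (a k:ℂ)/(w₀ + (c k:ℂ)))/2)
              - (Complex.I*(α:ℂ)
                - (Complex.I*(α:ℂ) + ∑' k, (a k:ℂ)/(Complex.I*(α:ℂ) + (c k:ℂ)))/2)‖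
            + ‖(Complex.I*(α:ℂ)
                - (Complex.I*(α:ℂ) + ∑' k, (a k:ℂ)/(Complex.I*(α:ℂ) + (c k:ℂ)))/2)
              - Complex.I*(α:ℂ)‖ := norm_sub_le_norm_sub_add_norm_sub _ _ _
        _ ≤ (1/4) * ‖w₀ - Complex.I*(α:ℂ)‖ + E/d := add_le_add h1 hcenter
    have h3 : (4/(3*d)) * E = (4/3) * (E/d) := by field_simp
    rw [h3]
    linarith
  exact ⟨w₀, hnorm_sub w₀ hw₀s, hroot, hbound⟩
lemma GP_E_tendsto {a b : ℕ → ℝ} (hA : Summable a) (ha' : ∀ k, 0 ≤ a k)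
    (hb : ∀ k, 0 ≤ b k) {d : ℝ} (hd : 0 < d) :
    Tendsto (fun n : ℕ => ∑' k, a k * min 1 (b k/(n*d))) atTop (𝓝 0) := by
  have h0 : (0:ℝ) = ∑' (_ : ℕ), (0:ℝ) := by rw [tsum_zero]
  rw [h0]
  apply tendsto_tsum_of_dominated_convergence (bound := a) hA
  · intro k
    have h1 : Tendsto (fun n : ℕ => b k/(n*d)) atTop (𝓝 0) := by
      have h2 : (fun n : ℕ => b k/(n*d)) = (fun n : ℕ => (b k/d) * (1/n)) := by
        funext n
        rw [mul_comm (n:ℝ) d, ← div_div, div_eq_mul_one_div]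
      rw [h2]
      have := tendsto_one_div_atTop_nhds_zero_nat.const_mul (b k / d)
      simpa using this
    have h3 : Tendsto (fun n : ℕ => min 1 (b k/(n*d))) atTop (𝓝 (min 1 0)) :=
      tendsto_const_nhds.min h1
    rw [min_eq_right (by norm_num : (0:ℝ) ≤ 1)] at h3
    have := h3.const_mul (a k)
    simpa using this
  · filter_upwards with n
    intro k
    rw [Real.norm_eq_abs, abs_of_nonneg (mul_nonneg (ha' k)
      (le_min zero_le_one (div_nonneg (hb k) (by positivity))))]
    exact mul_le_of_le_one_right (ha' k) (min_le_left _ _)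


lemma GP_scale (a b : ℕ → ℝ) (n : ℕ) (hn : 1 ≤ n) (w : ℂ) :
    GPG a b n ((n:ℂ) * w) = (n:ℂ) * (w + ∑' k, (a k:ℂ)/(w + ((b k/(n:ℝ) : ℝ):ℂ))) := by
  have hn0 : (n:ℂ) ≠ 0 := Nat.cast_ne_zero.mpr (by omega)
  unfold GPG GPK
  have hterm : ∀ k : ℕ, (a k:ℂ)/((n:ℂ)*w + (b k:ℂ))
      = (1/(n:ℂ)) * ((a k:ℂ)/(w + ((b k/(n:ℝ) : ℝ):ℂ))) := by
    intro k
    have hden : w + ((b k/(n:ℝ) : ℝ):ℂ) = ((n:ℂ)*w + (b k:ℂ))/(n:ℂ) := by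
      push_cast
      field_simp
    rw [hden, div_div_eq_mul_div, mul_comm ((a k:ℂ)) ((n:ℂ)), ← mul_div_assoc]
    rw [one_div, ← mul_assoc, inv_mul_cancel₀ hn0, one_mul]
  rw [tsum_congr hterm, tsum_mul_left]
  field_simp

lemma GP_conj (a b : ℕ → ℝ) (n : ℕ) (z : ℂ) :
    GPG a b n (starRingEnd ℂ z) = starRingEnd ℂ (GPG a b n z) := by
  unfold GPG GPK
  have h : ∀ k : ℕ, (a k:ℂ)/((starRingEnd ℂ z) + (b k:ℂ))
      = starRingEnd ℂ ((a k:ℂ)/(z + (b k:ℂ))) := by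
    intro k
    rw [map_div₀, map_add, Complex.conj_ofReal, Complex.conj_ofReal]
  rw [tsum_congr h, ← Complex.conj_tsum, map_add, map_mul, map_pow, map_natCast]

/-- For all large `n`, `G_n` has a zero `λ_n` in the upper half-plane with
`λ_n / n → iα` (i.e. `λ_n = iαn + o(n)`), and `conj λ_n` is a zero of `G_n` in the
lower half-plane. -/
theorem complex_zero_asymptotics
    (a b : ℕ → ℝ) (α : ℝ)
    (ha : ∀ k, 0 < a k) (hα : 0 < α) (hsum : HasSum a (α ^ 2))
    (hb0 : 0 ≤ b 0) (hbmono : StrictMono b) (hbtop : Tendsto b atTop atTop) :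
    ∃ n₀ : ℕ, ∃ lam : ℕ → ℂ,
      (∀ n : ℕ, n₀ ≤ n →
        0 < (lam n).im ∧ GPG a b n (lam n) = 0 ∧
        (starRingEnd ℂ (lam n)).im < 0 ∧ GPG a b n (starRingEnd ℂ (lam n)) = 0) ∧
      Tendsto (fun n : ℕ => lam n / (n : ℂ)) atTop (𝓝 (Complex.I * (α : ℂ))) := by
  have hb' : ∀ k, 0 ≤ b k := fun k => le_trans hb0 (hbmono.monotone (Nat.zero_le k))
  have hA : Summable a := hsum.summable
  have ha' : ∀ k, 0 ≤ a k := fun k => (ha k).le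
  have hd : (0:ℝ) < 7*α/8 := by linarith
  have hEt : Tendsto (fun n : ℕ => ∑' k, a k * min 1 (b k/(n*(7*α/8)))) atTop (𝓝 0) :=
    GP_E_tendsto hA ha' hb' hd
  have hev : ∀ᶠ n : ℕ in atTop, ∃ w : ℂ, ‖w - Complex.I*(α:ℂ)‖ ≤ α/8 ∧
      (w + ∑' k, (a k:ℂ)/(w + ((b k/(n:ℝ) : ℝ):ℂ)) = 0) ∧
      ‖w - Complex.I*(α:ℂ)‖ ≤ (4/(3*(7*α/8))) * (∑' k, a k * min 1 (b k/(n*(7*α/8)))) := by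
    have h1 := hEt.eventually
      (eventually_le_nhds (show (0:ℝ) < 15/392*((7*α/8)*(7*α/8)) by positivity))
    have h2 := hEt.eventually
      (eventually_le_nhds (show (0:ℝ) < 3/4*(α/8)*(7*α/8) by positivity))
    filter_upwards [h1, h2, eventually_ge_atTop 1] with n hn1 hn2 hn3
    exact GP_exists_root a b α ha hα hsum hb' n hn3 hn1 hn2
  obtain ⟨n₀, hn₀⟩ := eventually_atTop.1 hev
  set w : ℕ → ℂ := fun n => if h : n₀ ≤ n then (hn₀ n h).choose else Complex.I*(α:ℂ)
    with hw_def
  have hwspec : ∀ n, n₀ ≤ n → ‖w n - Complex.I*(α:ℂ)‖ ≤ α/8 ∧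
      (w n + ∑' k, (a k:ℂ)/(w n + ((b k/(n:ℝ) : ℝ):ℂ)) = 0) ∧
      ‖w n - Complex.I*(α:ℂ)‖ ≤ (4/(3*(7*α/8))) * (∑' k, a k * min 1 (b k/(n*(7*α/8)))) := by
    intro n h
    rw [hw_def]
    simp only [dif_pos h]
    exact (hn₀ n h).choose_spec
  refine ⟨max n₀ 1, fun n => (n:ℂ) * w n, ?_, ?_⟩
  · intro n hn
    have hn0' : n₀ ≤ n := le_trans (le_max_left _ _) hn
    have hn1 : 1 ≤ n := le_trans (le_max_right _ _) hn
    obtain ⟨hP1, hP2, hP3⟩ := hwspec n hn0'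
    have him : 7*α/8 ≤ (w n).im := by
      have h1 : (w n - Complex.I*(α:ℂ)).im = (w n).im - α := by simp
      have h2 : |(w n).im - α| ≤ α/8 := by
        rw [← h1]
        refine le_trans ?_ hP1
        exact Complex.abs_im_le_norm _
      linarith [(abs_le.1 h2).1]
    have hnr : (0:ℝ) < n := by exact_mod_cast hn1
    have himpos : 0 < ((n:ℂ) * w n).im := by
      have h3 : ((n:ℂ) * w n).im = n * (w n).im := by simp [Complex.mul_im]
      rw [h3]
      nlinarith
    have hzero : GPG a b n ((n:ℂ) * w n) = 0 := by
      rw [GP_scale a b n hn1 (w n), hP2, mul_zero]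
    refine ⟨himpos, hzero, ?_, ?_⟩
    · rw [Complex.conj_im]
      linarith
    · rw [GP_conj, hzero, map_zero]
  · have hwt : Tendsto w atTop (𝓝 (Complex.I*(α:ℂ))) := by
      rw [tendsto_iff_norm_sub_tendsto_zero]
      refine squeeze_zero'
        (g := fun n : ℕ => (4/(3*(7*α/8))) * ∑' k, a k * min 1 (b k/(n*(7*α/8))))
        (Eventually.of_forall fun n => norm_nonneg _) ?_ ?_
      · filter_upwards [eventually_ge_atTop n₀] with n hn
        exact (hwspec n hn).2.2
      · have := hEt.const_mul (4/(3*(7*α/8)))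
        simpa using this
    apply Tendsto.congr' ?_ hwt
    filter_upwards [eventually_ge_atTop 1] with n hn
    have hn0 : (n:ℂ) ≠ 0 := Nat.cast_ne_zero.mpr (by omega)
    exact (mul_div_cancel_left₀ (w n) hn0).symm
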